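/- arXiv:math/9911083 — 2 statements merged into one kernel-verified Lean document; each statement's English description precedes it below -/
import Mathlib

section
/- Let p be an odd prime and P an extraspecial p-group of exponent p². Then Ω₁(P), the subgroup generated by all elements of order dividing p, is a maximal subgroup of P (of index p), and it is the unique maximal subgroup of P of exponent p. -/
def IsExtraspecial (p : ℕ) (P : Type*) [Group P] : Prop :=
  Subgroup.center P = commutator P ∧ Subgroup.center P = frattini P ∧
    IsCyclic (Subgroup.center P) ∧ Nat.card (Subgroup.center P) = p

section Aux

variable {G : Type*} [Group G] {x y c : G}

lemma aux_cpow {c : G} (hc : ∀ g, c * g = g * c) (n : ℕ) (g : G) :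
    c ^ n * g = g * c ^ n :=
  (Commute.pow_left (hc g) n).eq

/-- If `y * x = x * y * c` with `c` central, then `y * x ^ n = x ^ n * y * c ^ n`. -/
lemma aux_pow_comm (h : y * x = x * y * c) (hc : ∀ g, c * g = g * c) (n : ℕ) :
    y * x ^ n = x ^ n * y * c ^ n := by
  induction n with
  | zero => simp
  | succ n ih =>
    calc y * x ^ (n + 1) = (y * x ^ n) * x := by rw [pow_succ, mul_assoc]
      _ = x ^ n * y * (c ^ n * x) := by rw [ih, mul_assoc]
      _ = x ^ n * y * (x * c ^ n) := by rw [aux_cpow hc n x]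
      _ = x ^ n * (y * x) * c ^ n := by simp only [mul_assoc]
      _ = x ^ n * (x * y * c) * c ^ n := by rw [h]
      _ = x ^ (n + 1) * y * c ^ (n + 1) := by
          rw [pow_succ x, pow_succ' c]
          simp only [mul_assoc]

/-- If `y * x = x * y * c` with `c` central, then `y ^ n * x = x * y ^ n * c ^ n`. -/
lemma aux_pow_comm' (h : y * x = x * y * c) (hc : ∀ g, c * g = g * c) (n : ℕ) :
    y ^ n * x = x * y ^ n * c ^ n := by
  induction n with
  | zero => simp
  | succ n ih =>
    calc y ^ (n + 1) * x = y ^ n * (y * x) := by rw [pow_succ, mul_assoc]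
      _ = y ^ n * (x * y * c) := by rw [h]
      _ = (y ^ n * x) * y * c := by simp only [mul_assoc]
      _ = x * y ^ n * c ^ n * y * c := by rw [ih]
      _ = x * y ^ n * (c ^ n * y) * c := by simp only [mul_assoc]
      _ = x * y ^ n * (y * c ^ n) * c := by rw [aux_cpow hc n y]
      _ = x * y ^ (n + 1) * c ^ (n + 1) := by
          rw [pow_succ y, pow_succ c]
          simp only [mul_assoc]

/-- Hall–Petrescu style identity in a class-2 situation. -/
lemma aux_mul_pow (h : y * x = x * y * c) (hc : ∀ g, c * g = g * c) (n : ℕ) :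
    (x * y) ^ n = x ^ n * y ^ n * c ^ n.choose 2 := by
  induction n with
  | zero => simp
  | succ n ih =>
    have hch : (n + 1).choose 2 = n + n.choose 2 := by
      rw [Nat.choose_succ_succ n 1, Nat.choose_one_right]
    calc (x * y) ^ (n + 1)
        = x ^ n * y ^ n * c ^ n.choose 2 * x * y := by
          rw [pow_succ, ih, ← mul_assoc]
      _ = x ^ n * y ^ n * (c ^ n.choose 2 * x) * y := by
          rw [mul_assoc (x ^ n * y ^ n) (c ^ n.choose 2) x]
      _ = x ^ n * y ^ n * (x * c ^ n.choose 2) * y := by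
          rw [aux_cpow hc _ x]
      _ = x ^ n * (y ^ n * x) * (c ^ n.choose 2 * y) := by simp only [mul_assoc]
      _ = x ^ n * (x * y ^ n * c ^ n) * (y * c ^ n.choose 2) := by
          rw [aux_pow_comm' h hc n, aux_cpow hc _ y]
      _ = x ^ (n + 1) * y ^ (n + 1) * c ^ (n + 1).choose 2 := by
          rw [hch, pow_add c n (n.choose 2), pow_succ x n, pow_succ y n]
          simp only [mul_assoc]
          rw [← mul_assoc (c ^ n) y (c ^ n.choose 2), aux_cpow hc n y]
          simp only [mul_assoc]

end Aux

open scoped commutatorElement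

/-- For `p` odd and `P` extraspecial of exponent `p²`, the subgroup
`Ω₁(P) = ⟨g : g^p = 1⟩` is a maximal subgroup (of index `p`), and it is the
unique maximal subgroup of `P` of exponent `p`. -/
theorem omega1_unique_maximal_exponent_p
    (p : ℕ) [Fact p.Prime] (hp : Odd p) (P : Type*) [Group P] [Finite P]
    (hP : IsPGroup p P) (hE : IsExtraspecial p P)
    (hexp : Monoid.exponent P = p ^ 2) :
    (Subgroup.closure {g : P | g ^ p = 1}).index = p ∧
      ∀ M : Subgroup P, M.index = p → (∀ g ∈ M, g ^ p = 1) →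
        M = Subgroup.closure {g : P | g ^ p = 1} := by
  obtain ⟨hcomm, hfrat, hcyc, hcard⟩ := hE
  have hpp : p.Prime := Fact.out
  -- every central element has order dividing p
  have hZp : ∀ z ∈ Subgroup.center P, z ^ p = 1 := by
    intro z hz
    have h1 : (⟨z, hz⟩ : Subgroup.center P) ^ p = 1 := by
      rw [← hcard]; exact pow_card_eq_one'
    simpa using congrArg Subtype.val h1
  -- every commutator is central
  have hc_mem : ∀ x y : P, ⁅x, y⁆ ∈ Subgroup.center P := fun x y => by
    rw [hcomm, commutator_def]
    exact Subgroup.commutator_mem_commutator (Subgroup.mem_top x) (Subgroup.mem_top y)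
  -- the basic relation
  have hrel : ∀ x y : P, y * x = x * y * ⁅y, x⁆ := by
    intro x y
    have hc := Subgroup.mem_center_iff.mp (hc_mem y x) (x * y)
    rw [hc, commutatorElement_def]
    group
  have hcen : ∀ x y : P, ∀ g : P, ⁅y, x⁆ * g = g * ⁅y, x⁆ := fun x y g =>
    (Subgroup.mem_center_iff.mp (hc_mem y x) g).symm
  -- p divides p choose 2
  have hdvd : p ∣ p.choose 2 := by
    have hne : p ≠ 2 := by rintro rfl; simp [Nat.odd_iff] at hp
    have h2 : 2 < p := by have := hpp.two_le; omega
    exact Nat.Prime.dvd_choose_self hpp (by norm_num) h2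
  -- p-th power map is a homomorphism into the center
  have hmulpow : ∀ x y : P, (x * y) ^ p = x ^ p * y ^ p := by
    intro x y
    rw [aux_mul_pow (hrel x y) (hcen x y) p]
    obtain ⟨k, hk⟩ := hdvd
    rw [hk, pow_mul, hZp _ (hc_mem y x), one_pow, mul_one]
  have hcentral_pow : ∀ g : P, g ^ p ∈ Subgroup.center P := by
    intro g
    rw [Subgroup.mem_center_iff]
    intro h
    rw [aux_pow_comm (hrel g h) (hcen g h) p, hZp _ (hc_mem h g), mul_one]
  set φ : P →* Subgroup.center P :=
    MonoidHom.mk' (fun g => ⟨g ^ p, hcentral_pow g⟩)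
      (fun a b => Subtype.ext (hmulpow a b)) with hφ
  have hker_mem : ∀ g : P, g ∈ φ.ker ↔ g ^ p = 1 := by
    intro g
    rw [MonoidHom.mem_ker]
    have hφg : φ g = ⟨g ^ p, hcentral_pow g⟩ := rfl
    rw [hφg, Subtype.ext_iff]
    simp
  have hK : Subgroup.closure {g : P | g ^ p = 1} = φ.ker := by
    apply le_antisymm
    · rw [Subgroup.closure_le]
      intro g hg
      exact (hker_mem g).mpr hg
    · intro g hg
      exact Subgroup.subset_closure ((hker_mem g).mp hg)
  have hrange : Nat.card φ.range = p := by
    have hdvd' : Nat.card φ.range ∣ p := hcard ▸ φ.range.card_subgroup_dvd_card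
    rcases Nat.Prime.eq_one_or_self_of_dvd hpp _ hdvd' with h | h
    · exfalso
      have hbot : φ.range = ⊥ := Subgroup.card_eq_one.mp h
      have hall : ∀ g : P, g ^ p = 1 := by
        intro g
        have hm : φ g ∈ φ.range := ⟨g, rfl⟩
        rw [hbot, Subgroup.mem_bot] at hm
        exact (hker_mem g).mp (MonoidHom.mem_ker.mpr hm)
      have hd := Monoid.exponent_dvd_of_forall_pow_eq_one hall
      rw [hexp] at hd
      have hle := Nat.le_of_dvd hpp.pos hd
      nlinarith [hpp.two_le]
    · exact h
  have hindex : φ.ker.index = p := by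
    rw [Subgroup.index_ker, hrange]
  refine ⟨by rw [hK, hindex], ?_⟩
  intro M hM hMexp
  have hle : M ≤ φ.ker := fun g hg => (hker_mem g).mpr (hMexp g hg)
  have hrel1 : M.relIndex φ.ker * φ.ker.index = M.index := Subgroup.relIndex_mul_index hle
  rw [hindex, hM] at hrel1
  have hone : M.relIndex φ.ker = 1 :=
    Nat.eq_of_mul_eq_mul_right hpp.pos (by rw [hrel1, one_mul])
  have hge : φ.ker ≤ M := Subgroup.relIndex_eq_one.mp hone
  rw [hK]
  exact le_antisymm hle hge
end

section
/- Let P be an extraspecial p-group of exponent p (p odd) or an extraspecial 2-group with |P| ≥ 2⁵, or any extraspecial p-group of order p^{1+2n} with n ≥ 2. Then for every element g ∈ P of order p, the centralizer C_P(g) is nonabelian, and its Frattini subgroup equals Φ(P) = Z(P). -/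
open Subgroup
open scoped commutatorElement

/-- Every maximal subgroup of a finite `p`-group contains all commutators and
all `p`-th powers. -/
lemma pgroup_coatom_facts {p : ℕ} [Fact p.Prime] {G : Type*} [Group G] [Finite G]
    (hG : IsPGroup p G) {M : Subgroup G} (hM : IsCoatom M) :
    (∀ x y : G, ⁅x, y⁆ ∈ M) ∧ (∀ x : G, x ^ p ∈ M) := by
  have hnil : Group.IsNilpotent G := hG.isNilpotent
  have htfae : Group.IsNilpotent G ↔ ∀ H : Subgroup G, IsCoatom H → H.Normal :=
    (isNilpotent_of_finite_tfae (G := G)).out 0 2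
  haveI hMn : M.Normal := htfae.mp hnil M hM
  have hQ : IsPGroup p (G ⧸ M) := hG.to_quotient M
  obtain ⟨x0, hx0⟩ : ∃ x : G, x ∉ M := by
    by_contra h
    push_neg at h
    exact hM.1 (eq_top_iff.mpr fun x _ => h x)
  have hQnt : Nontrivial (G ⧸ M) :=
    ⟨⟨QuotientGroup.mk x0, 1, by
      simpa [QuotientGroup.eq_one_iff] using hx0⟩⟩
  have hpdvd : p ∣ Nat.card (G ⧸ M) := by
    obtain ⟨k, hk⟩ := IsPGroup.iff_card.mp hQ
    rcases Nat.eq_zero_or_pos k with rfl | hkpos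
    · simp only [pow_zero] at hk
      exact absurd (Nat.card_eq_one_iff_unique.mp hk).1 (not_subsingleton _)
    · exact hk ▸ dvd_pow_self p hkpos.ne'
  obtain ⟨q, hq⟩ := exists_prime_orderOf_dvd_card' (G := G ⧸ M) p hpdvd
  have hqtop : Subgroup.zpowers q = ⊤ := by
    have h1 : M ≤ Subgroup.comap (QuotientGroup.mk' M) (Subgroup.zpowers q) := by
      intro m hm
      rw [Subgroup.mem_comap]
      have h0 : QuotientGroup.mk' M m = 1 := (QuotientGroup.eq_one_iff m).mpr hm
      rw [h0]
      exact one_mem _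
    obtain ⟨x, hxq⟩ := QuotientGroup.mk'_surjective M q
    have hq1 : q ≠ 1 := by
      intro h
      rw [h, orderOf_one] at hq
      exact (Fact.out : p.Prime).one_lt.ne' hq.symm
    have hxM : x ∉ M := by
      intro h
      exact hq1 (hxq ▸ (QuotientGroup.eq_one_iff x).mpr h)
    have hne : M ≠ Subgroup.comap (QuotientGroup.mk' M) (Subgroup.zpowers q) := by
      intro h
      apply hxM
      rw [h]
      simp [Subgroup.mem_comap, hxq, Subgroup.mem_zpowers]
    have h2 : Subgroup.comap (QuotientGroup.mk' M) (Subgroup.zpowers q) = ⊤ :=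
      hM.2 _ (lt_of_le_of_ne h1 hne)
    have := congrArg (Subgroup.map (QuotientGroup.mk' M)) h2
    rwa [Subgroup.map_comap_eq_self_of_surjective (QuotientGroup.mk'_surjective M),
      Subgroup.map_top_of_surjective _ (QuotientGroup.mk'_surjective M)] at this
  have hcardQ : Nat.card (G ⧸ M) = p := by
    rw [← hq, ← Nat.card_zpowers q, hqtop]
    exact Nat.card_congr Subgroup.topEquiv.toEquiv.symm
  constructor
  · intro x y
    haveI : Fact (Nat.card (G ⧸ M) = p)  := ⟨hcardQ⟩
    haveI : IsCyclic (G ⧸ M) := isCyclic_of_prime_card hcardQ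
    letI : CommGroup (G ⧸ M) := IsCyclic.commGroup
    have : (QuotientGroup.mk' M) ⁅x, y⁆ = 1 := by
      rw [map_commutatorElement, commutatorElement_eq_one_iff_mul_comm]
      exact mul_comm _ _
    exact (QuotientGroup.eq_one_iff _).mp this
  · intro x
    have : (QuotientGroup.mk' M) (x ^ p) = 1 := by
      rw [map_pow, ← hcardQ]
      exact pow_card_eq_one'
    exact (QuotientGroup.eq_one_iff _).mp this

/-- In a finite `p`-group, all commutators and `p`-th powers lie in the Frattini
subgroup. -/
lemma pgroup_le_frattini {p : ℕ} [Fact p.Prime] {G : Type*} [Group G] [Finite G]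
    (hG : IsPGroup p G) :
    (∀ x y : G, ⁅x, y⁆ ∈ frattini G) ∧ (∀ x : G, x ^ p ∈ frattini G) := by
  have key : ∀ x : G, (∀ M : Subgroup G, IsCoatom M → x ∈ M) → x ∈ frattini G := by
    intro x h
    have : frattini G = ⨅ M ∈ {H : Subgroup G | IsCoatom H}, M := rfl
    rw [this]
    simp only [Subgroup.mem_iInf, Set.mem_setOf_eq]
    exact h
  exact ⟨fun x y => key _ fun M hM => (pgroup_coatom_facts hG hM).1 x y,
    fun x => key _ fun M hM => (pgroup_coatom_facts hG hM).2 x⟩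

/-- The Frattini subgroup of a finite elementary abelian group is trivial. -/
lemma frattini_eq_bot_of_elemAbelian {p : ℕ} (hp : p.Prime) {Q : Type*} [Group Q] [Finite Q]
    (hcomm : ∀ a b : Q, a * b = b * a) (hpow : ∀ x : Q, x ^ p = 1) :
    frattini Q = ⊥ := by
  letI : CommGroup Q := { (inferInstance : Group Q) with mul_comm := hcomm }
  rw [eq_bot_iff]
  intro a ha
  rw [Subgroup.mem_bot]
  by_contra hane
  haveI : Finite (Subgroup Q) :=
    Finite.of_injective (fun H : Subgroup Q => (H : Set Q)) SetLike.coe_injective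
  have hfin : ({H : Subgroup Q | a ∉ H}).Finite := Set.toFinite _
  have hbot : (⊥ : Subgroup Q) ∈ {H : Subgroup Q | a ∉ H} := by
    simp [Set.mem_setOf_eq, Subgroup.mem_bot, hane]
  obtain ⟨M, hMS, hMmax'⟩ := hfin.exists_maximalFor id _ ⟨⊥, hbot⟩
  have hMmax : ∀ H ∈ {H : Subgroup Q | a ∉ H}, id M ≤ id H → id M = id H :=
    fun H hH hle => le_antisymm hle (hMmax' hH hle)
  simp only [id] at hMmax
  have hkey : ∀ x : Q, x ∉ M → a ∈ M ⊔ Subgroup.zpowers x := by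
    intro x hx
    by_contra h
    have := hMmax _ h le_sup_left
    exact hx (this ▸ Subgroup.mem_sup_right (Subgroup.mem_zpowers x))
  have haM : a ∉ M := hMS
  have htop : M ⊔ Subgroup.zpowers a = ⊤ := by
    rw [eq_top_iff]
    intro y _
    by_cases hy : y ∈ M
    · exact Subgroup.mem_sup_left hy
    · obtain ⟨m, hm, z, hz, hmz⟩ := Subgroup.mem_sup.mp (hkey y hy)
      obtain ⟨k, rfl⟩ := Subgroup.mem_zpowers_iff.mp hz
      have hyk : y ^ k ∉ M := fun h => haM (hmz ▸ M.mul_mem hm h)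
      have hykne : y ^ k ≠ 1 := fun h => hyk (h ▸ M.one_mem)
      have hpk : ¬ ((p : ℤ) ∣ k) := by
        rintro ⟨c, rfl⟩
        apply hykne
        rw [zpow_mul, zpow_natCast, hpow, one_zpow]
      have hgcd : Int.gcd (p : ℤ) k = 1 := by
        have hcop : Nat.Coprime p k.natAbs :=
          (hp.coprime_iff_not_dvd).mpr fun h =>
            hpk ((Int.natCast_dvd_natCast.mpr h).trans (Int.natAbs_dvd.mpr dvd_rfl))
        simpa [Int.gcd, Int.natAbs_natCast] using hcop
      obtain ⟨u, v, huv⟩ := Int.isCoprime_iff_gcd_eq_one.mpr hgcd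
      have hykmem : y ^ k ∈ M ⊔ Subgroup.zpowers a := by
        have h1 : y ^ k = m⁻¹ * a := by
          rw [← hmz]; group
        rw [h1]
        exact mul_mem (Subgroup.mem_sup_left (M.inv_mem hm))
          (Subgroup.mem_sup_right (Subgroup.mem_zpowers a))
      have hyeq : y = (y ^ ((p : ℤ)) ) ^ u * (y ^ k) ^ v := by
        have hexp : ((p : ℤ) * u + k * v) = 1 := by linear_combination huv
        rw [← zpow_mul, ← zpow_mul, ← zpow_add, hexp, zpow_one]
      rw [hyeq]
      have hyp : y ^ ((p : ℤ)) = 1 := by rw [zpow_natCast, hpow]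
      rw [hyp, one_zpow, one_mul]
      exact zpow_mem hykmem v
  have hcoatom : IsCoatom M := by
    constructor
    · intro h
      exact haM (h ▸ Subgroup.mem_top a)
    · intro H hH
      obtain ⟨x, hxH, hxM⟩ := SetLike.exists_of_lt hH
      have haH : a ∈ H := by
        have := hkey x hxM
        have hle : M ⊔ Subgroup.zpowers x ≤ H :=
          sup_le hH.le ((Subgroup.zpowers_le).mpr hxH)
        exact hle this
      rw [eq_top_iff, ← htop]
      exact sup_le hH.le ((Subgroup.zpowers_le).mpr haH)
  exact haM (frattini_le_coatom hcoatom ha)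

/-- The homomorphism `x ↦ ⁅x, t⁆` into the center, when all commutators are central. -/
def commHom {P : Type*} [Group P] (hcent : ∀ x y : P, ⁅x, y⁆ ∈ Subgroup.center P) (t : P) :
    P →* Subgroup.center P where
  toFun x := ⟨⁅x, t⁆, hcent x t⟩
  map_one' := by
    ext
    show ⁅(1 : P), t⁆ = 1
    group
  map_mul' x y := by
    ext
    show ⁅x * y, t⁆ = ⁅x, t⁆ * ⁅y, t⁆
    have hz := Subgroup.mem_center_iff.mp (hcent y t)
    calc ⁅x * y, t⁆ = x * ⁅y, t⁆ * (t * x⁻¹ * t⁻¹) := by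
          simp only [commutatorElement_def]; group
      _ = ⁅y, t⁆ * x * (t * x⁻¹ * t⁻¹) := by rw [hz x]
      _ = ⁅y, t⁆ * ⁅x, t⁆ := by simp only [commutatorElement_def]; group
      _ = ⁅x, t⁆ * ⁅y, t⁆ := (hz ⁅x, t⁆).symm

/-- Let `P` be an extraspecial `p`-group of order `p^(1+2n)` with `n ≥ 2`
(this covers exponent-`p` groups for odd `p` and `2`-groups of order `≥ 2⁵`,
excluding the exceptional groups `D₈`, `E` and `M(p³)` of order `p³`).
Then for every element `g` of order `p`, the centralizer `C_P(g)` is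
nonabelian and its Frattini subgroup equals `Φ(P) = Z(P)`. -/
theorem centralizer_frattini_of_order_p
    (p : ℕ) [Fact p.Prime] (P : Type*) [Group P] [Finite P]
    (hP : IsPGroup p P) (hE : IsExtraspecial p P)
    (n : ℕ) (hn : 2 ≤ n) (hcard : Nat.card P = p ^ (1 + 2 * n)) :
    ∀ g : P, orderOf g = p →
      (¬ ∀ a ∈ Subgroup.centralizer {g}, ∀ b ∈ Subgroup.centralizer {g},
          a * b = b * a) ∧
      (frattini ↥(Subgroup.centralizer {g})).map
          (Subgroup.centralizer {g}).subtype = frattini P ∧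
      frattini P = Subgroup.center P := by
  intro g _
  obtain ⟨hZcomm, hZfrat, -, hZcard⟩ := hE
  have hp : p.Prime := Fact.out
  have hcent : ∀ x y : P, ⁅x, y⁆ ∈ Subgroup.center P := by
    intro x y
    rw [hZcomm, _root_.commutator_def]
    exact Subgroup.commutator_mem_commutator (Subgroup.mem_top x) (Subgroup.mem_top y)
  have hpow : ∀ x : P, x ^ p ∈ Subgroup.center P := by
    intro x
    rw [hZfrat]
    exact (pgroup_le_frattini hP).2 x
  set C := Subgroup.centralizer {g} with hC
  -- the key homomorphism with kernel C
  have hker : (commHom hcent g).ker = C := by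
    ext x
    rw [MonoidHom.mem_ker, hC, Subgroup.mem_centralizer_singleton_iff]
    constructor
    · intro h
      have h1 : ⁅x, g⁆ = 1 := congrArg Subtype.val h
      exact commutatorElement_eq_one_iff_mul_comm.mp h1
    · intro h
      exact Subtype.ext (commutatorElement_eq_one_iff_mul_comm.mpr h)
  have hcenter_card : Nat.card (Subgroup.center P) = p := hZcard
  have hindexC : C.index ≤ p := by
    rw [← hker, Subgroup.index_ker]
    have hdvd : Nat.card (commHom hcent g).range ∣ Nat.card (Subgroup.center P) :=
      Subgroup.card_subgroup_dvd_card _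
    have := Nat.le_of_dvd (hcenter_card ▸ hp.pos) hdvd
    rwa [hcenter_card] at this
  have hindexC_pos : C.index ≠ 0 := Subgroup.index_ne_zero_of_finite
  have hcardC_ge : p ^ (2 * n) ≤ Nat.card C := by
    have h1 : Nat.card C * C.index = p ^ (1 + 2 * n) := by
      rw [Subgroup.card_mul_index, hcard]
    have h2 : p ^ (1 + 2 * n) ≤ Nat.card C * p := by
      rw [← h1]
      exact Nat.mul_le_mul_left _ hindexC
    rw [pow_add, pow_one, mul_comm p (p ^ (2 * n))] at h2
    exact Nat.le_of_mul_le_mul_right h2 hp.pos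
  have hZleC : Subgroup.center P ≤ C := by
    intro z hz
    rw [hC, Subgroup.mem_centralizer_singleton_iff]
    exact (Subgroup.mem_center_iff.mp hz g).symm
  -- nonabelian-ness of C
  have hnab : ¬ ∀ a ∈ C, ∀ b ∈ C, a * b = b * a := by
    intro hab
    by_cases hgz : g ∈ Subgroup.center P
    · -- C = ⊤, so P would be abelian
      have hCtop : C = ⊤ := by
        rw [eq_top_iff]
        intro x _
        rw [hC, Subgroup.mem_centralizer_singleton_iff]
        exact Subgroup.mem_center_iff.mp hgz x
      have hPab : ∀ x y : P, x * y = y * x := by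
        intro x y
        exact hab x (hCtop ▸ Subgroup.mem_top x) y (hCtop ▸ Subgroup.mem_top y)
      have hcommbot : commutator P = ⊥ := by
        rw [_root_.commutator_def, eq_bot_iff]
        rw [Subgroup.commutator_le]
        intro a _ b _
        rw [Subgroup.mem_bot, commutatorElement_eq_one_iff_mul_comm]
        exact hPab a b
      rw [hcommbot] at hZcomm
      rw [hZcomm] at hZcard
      rw [Subgroup.card_bot] at hZcard
      exact hp.one_lt.ne' hZcard.symm
    · -- g not central: C is a proper subgroup of index p, abelian gives card ≤ p²
      obtain ⟨x, hx⟩ : ∃ x : P, ¬ (x * g = g * x) := by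
        by_contra h
        push_neg at h
        exact hgz (Subgroup.mem_center_iff.mpr fun b => h b)
      have hxC : x ∉ C := by
        intro h
        rw [hC, Subgroup.mem_centralizer_singleton_iff] at h
        exact hx h
      have hCindex : C.index = p := by
        have h1 : C.index ∣ p := by
          rw [← hker, Subgroup.index_ker]
          have : Nat.card (commHom hcent g).range ∣ Nat.card (Subgroup.center P) :=
            Subgroup.card_subgroup_dvd_card _
          rwa [hcenter_card] at this
        rcases (hp.eq_one_or_self_of_dvd _ h1) with h | h
        · exact absurd (Subgroup.index_eq_one.mp h)
            (fun ht => hxC (ht ▸ Subgroup.mem_top x))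
        · exact h
      have hsup : C ⊔ Subgroup.zpowers x = ⊤ := by
        have hle : C ≤ C ⊔ Subgroup.zpowers x := le_sup_left
        have h1 : C.relIndex (C ⊔ Subgroup.zpowers x) * (C ⊔ Subgroup.zpowers x).index
            = C.index := Subgroup.relIndex_mul_index hle
        rw [hCindex] at h1
        have hdvd : (C ⊔ Subgroup.zpowers x).index ∣ p :=
          ⟨C.relIndex (C ⊔ Subgroup.zpowers x), by rw [← h1, mul_comm]⟩
        rcases hp.eq_one_or_self_of_dvd _ hdvd with h | h
        · exact Subgroup.index_eq_one.mp h
        · rw [h] at h1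
          have hrel : C.relIndex (C ⊔ Subgroup.zpowers x) = 1 :=
            Nat.eq_of_mul_eq_mul_right hp.pos (by rw [one_mul]; exact h1)
          have hle2 : C ⊔ Subgroup.zpowers x ≤ C := Subgroup.relIndex_eq_one.mp hrel
          exact absurd (hle2 (Subgroup.mem_sup_right (Subgroup.mem_zpowers x))) hxC
      -- the second homomorphism ψ on C
      set ψ := (commHom hcent x).comp C.subtype with hψ
      have hkerψ : ∀ c : C, c ∈ ψ.ker → (c : P) ∈ Subgroup.center P := by
        intro c hc
        have hcx : (c : P) * x = x * (c : P) := by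
          have h1 : ⁅(c : P), x⁆ = 1 := congrArg Subtype.val (MonoidHom.mem_ker.mp hc)
          rwa [commutatorElement_eq_one_iff_mul_comm] at h1
        have hDtop : Subgroup.centralizer {(c : P)} = ⊤ := by
          rw [eq_top_iff, ← hsup]
          apply sup_le
          · intro b hb
            rw [Subgroup.mem_centralizer_singleton_iff]
            exact (hab (c : P) c.2 b hb).symm
          · rw [Subgroup.zpowers_le, Subgroup.mem_centralizer_singleton_iff]
            exact hcx.symm
        rw [Subgroup.mem_center_iff]
        intro b
        have : b ∈ Subgroup.centralizer {(c : P)} := hDtop ▸ Subgroup.mem_top b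
        exact (Subgroup.mem_centralizer_singleton_iff.mp this)
      have hkerψ_le : ψ.ker ≤ (Subgroup.center P).comap C.subtype := by
        intro c hc
        exact hkerψ c hc
      have hcard_kerψ : Nat.card ψ.ker ≤ p := by
        calc Nat.card ψ.ker ≤ Nat.card ((Subgroup.center P).comap C.subtype) :=
              Subgroup.card_le_of_le hkerψ_le
          _ = Nat.card (((Subgroup.center P).comap C.subtype).map C.subtype) :=
              Nat.card_congr (Subgroup.equivMapOfInjective _ _ C.subtype_injective).toEquiv
          _ ≤ Nat.card (Subgroup.center P) :=
              Subgroup.card_le_of_le (Subgroup.map_comap_le _ _)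
          _ = p := hcenter_card
      have hcard_range : ψ.ker.index ≤ p := by
        rw [Subgroup.index_ker]
        calc Nat.card ψ.range ≤ Nat.card (Subgroup.center P) := by
              have : Nat.card ψ.range ∣ Nat.card (Subgroup.center P) :=
                Subgroup.card_subgroup_dvd_card _
              exact Nat.le_of_dvd (by rw [hcenter_card]; exact hp.pos) this
          _ = p := hcenter_card
      have hcardC_le : Nat.card C ≤ p * p := by
        calc Nat.card C = Nat.card ψ.ker * ψ.ker.index := (Subgroup.card_mul_index _).symm
          _ ≤ p * p := Nat.mul_le_mul hcard_kerψ hcard_range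
      have : p ^ (2 * n) ≤ p ^ 2 := by
        calc p ^ (2 * n) ≤ Nat.card C := hcardC_ge
          _ ≤ p * p := hcardC_le
          _ = p ^ 2 := (sq p).symm
      have h2n : 2 * n ≤ 2 := (Nat.pow_le_pow_iff_right hp.one_lt).mp this
      omega
  refine ⟨hnab, ?_, hZfrat.symm⟩
  -- now the Frattini computation
  have hCpgroup : IsPGroup p C := hP.to_subgroup C
  -- (⊆) direction: frattini C maps into the center
  have hsub : (frattini ↥C).map C.subtype ≤ Subgroup.center P := by
    have hKnormal : ((Subgroup.center P).comap C.subtype).Normal := by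
      constructor
      intro m hm c
      rw [Subgroup.mem_comap] at hm ⊢
      have hmP : (m : P) ∈ Subgroup.center P := hm
      have h1 : (c : P) * (m : P) = (m : P) * (c : P) :=
        Subgroup.mem_center_iff.mp hmP (c : P)
      have heq : (C.subtype (c * m * c⁻¹)) = (m : P) := by
        simp only [Subgroup.coe_subtype]
        push_cast
        rw [h1]
        group
      rw [heq]
      exact hmP
    haveI := hKnormal
    set K := (Subgroup.center P).comap C.subtype
    have hfc : frattini ↥C ≤ K := by
      have h1 : frattini ↥C ≤ (frattini (↥C ⧸ K)).comap (QuotientGroup.mk' K) :=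
        frattini_le_comap_frattini_of_surjective (QuotientGroup.mk'_surjective K)
      have h2 : frattini (↥C ⧸ K) = ⊥ := by
        apply frattini_eq_bot_of_elemAbelian hp
        · intro a b
          obtain ⟨c, rfl⟩ := QuotientGroup.mk'_surjective K a
          obtain ⟨d, rfl⟩ := QuotientGroup.mk'_surjective K b
          rw [← map_mul, ← map_mul]
          apply (QuotientGroup.eq (a := c * d) (b := d * c)).mpr
          show ((c * d)⁻¹ * (d * c) : C) ∈ K
          rw [Subgroup.mem_comap]
          simp only [Subgroup.coe_subtype]
          have heq : (((c * d)⁻¹ * (d * c) : C) : P) = ⁅(d : P)⁻¹, (c : P)⁻¹⁆ := by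
            push_cast
            rw [commutatorElement_def]
            group
          rw [heq]
          exact hcent _ _
        · intro q
          obtain ⟨c, rfl⟩ := QuotientGroup.mk'_surjective K q
          rw [← map_pow]
          refine (QuotientGroup.eq_one_iff _).mpr ?_
          show c ^ p ∈ K
          rw [Subgroup.mem_comap]
          simpa using hpow (c : P)
      rw [h2] at h1
      intro y hy
      have h3 := h1 hy
      simp only [Subgroup.mem_comap, Subgroup.mem_bot] at h3
      exact (QuotientGroup.eq_one_iff y).mp h3
    calc (frattini ↥C).map C.subtype ≤ K.map C.subtype := Subgroup.map_mono hfc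
      _ ≤ Subgroup.center P := Subgroup.map_comap_le _ _
  -- (⊇) direction: the center is contained in the image
  have hsup2 : Subgroup.center P ≤ (frattini ↥C).map C.subtype := by
    -- find a nontrivial commutator in C
    push_neg at hnab
    obtain ⟨a, ha, b, hb, hne⟩ := hnab
    set a' : C := ⟨a, ha⟩
    set b' : C := ⟨b, hb⟩
    have ht0 : ⁅a', b'⁆ ∈ frattini ↥C := (pgroup_le_frattini hCpgroup).1 a' b'
    set t : P := ⁅a, b⁆ with htdef
    have htne : t ≠ 1 := by
      rw [htdef, Ne, commutatorElement_eq_one_iff_mul_comm]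
      exact hne
    have htmap : t ∈ (frattini ↥C).map C.subtype := by
      refine ⟨⁅a', b'⁆, ht0, ?_⟩
      rw [map_commutatorElement]
      rfl
    have htZ : t ∈ Subgroup.center P := hcent a b
    -- t generates the center
    set τ : Subgroup.center P := ⟨t, htZ⟩
    have hτne : τ ≠ 1 := by
      intro h
      apply htne
      exact congrArg Subtype.val h
    have hτord : orderOf τ = p := by
      have h1 : orderOf τ ∣ p := hcenter_card ▸ orderOf_dvd_natCard τ
      rcases hp.eq_one_or_self_of_dvd _ h1 with h | h
      · exact absurd (orderOf_eq_one_iff.mp h) hτne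
      · exact h
    have hτtop : Subgroup.zpowers τ = ⊤ := by
      apply Subgroup.eq_top_of_card_eq
      rw [Nat.card_zpowers, hτord, hcenter_card]
    intro z hz
    have : (⟨z, hz⟩ : Subgroup.center P) ∈ Subgroup.zpowers τ := hτtop ▸ Subgroup.mem_top _
    obtain ⟨k, hk⟩ := Subgroup.mem_zpowers_iff.mp this
    have hzk : z = t ^ k := by
      have h2 : ((τ ^ k : Subgroup.center P) : P) = z := congrArg Subtype.val hk
      rw [← h2]
      simp
      rfl
    rw [hzk]
    exact Subgroup.zpow_mem _ htmap k
  rw [← hZfrat]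
  exact le_antisymm hsub hsup2
end
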